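/- Block-circulant structure of the Gang-of-Four: for square tensors 𝒢, ℋ of the same size with I + ℋ * 𝒢 T-invertible, there exists a permutation matrix P such that bcirc(𝒢 ~# ℋ) = Pᵀ · (bcirc(𝒢) ~# bcirc(ℋ)) · P, where M ~# N denotes the 2×2 block matrix [[(I+NM)^{-1}, (I+NM)^{-1}N],[M(I+NM)^{-1}, M(I+NM)^{-1}N]] and 𝒢 ~# ℋ the analogous block tensor under the T-product. -/
import Mathlib


open Matrix

/-- Block-circulant embedding of a third-order tensor given by its frontal slices
(rows/columns of each slice indexed by arbitrary finite types). -/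
def bcirc {m n : Type*} {p : ℕ} (A : Fin p → Matrix m n ℂ) :
    Matrix (Fin p × m) (Fin p × n) ℂ :=
  Matrix.of fun x y => A (x.1 - y.1) x.2 y.2

/-- Unfolding of a tensor: stacking of its frontal slices. -/
def unfold {n s : Type*} {p : ℕ} (B : Fin p → Matrix n s ℂ) :
    Matrix (Fin p × n) s ℂ :=
  Matrix.of fun x c => B x.1 x.2 c

/-- The T-product `𝒜 * 𝒝 = fold (bcirc 𝒜 · unfold 𝒝)`, expressed slice-wise. -/
noncomputable def tProd {m n s : Type*} [Fintype n] {p : ℕ}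
    (A : Fin p → Matrix m n ℂ) (B : Fin p → Matrix n s ℂ) :
    Fin p → Matrix m s ℂ :=
  fun k => Matrix.of fun r c => (bcirc A * unfold B) (k, r) c

/-- The identity tensor `ℐ`, characterized by `bcirc ℐ = I`. -/
def idT {n : Type*} [Fintype n] [DecidableEq n] {p : ℕ} [NeZero p] :
    Fin p → Matrix n n ℂ :=
  fun k => if k = 0 then 1 else 0

/-- The Gang-of-Four of two square matrices `M, N`:
`[[(I+NM)⁻¹, (I+NM)⁻¹N], [M(I+NM)⁻¹, M(I+NM)⁻¹N]]`. -/
noncomputable def gangOfFour {α : Type*} [Fintype α] [DecidableEq α]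
    (M N : Matrix α α ℂ) : Matrix (α ⊕ α) (α ⊕ α) ℂ :=
  Matrix.fromBlocks (1 + N * M)⁻¹ ((1 + N * M)⁻¹ * N)
    (M * (1 + N * M)⁻¹) (M * (1 + N * M)⁻¹ * N)

lemma bcirc_tProd {m n s : Type*} [Fintype n] {p : ℕ} [NeZero p]
    (A : Fin p → Matrix m n ℂ) (B : Fin p → Matrix n s ℂ) :
    bcirc (tProd A B) = bcirc A * bcirc B := by
  ext ⟨k, r⟩ ⟨l, c⟩
  simp only [bcirc, tProd, unfold, Matrix.mul_apply, Matrix.of_apply]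
  rw [← (Equiv.prodCongr (Equiv.subRight l) (Equiv.refl n)).sum_comp]
  apply Fintype.sum_congr
  rintro ⟨j, t⟩
  simp [sub_sub_sub_cancel_right]

lemma bcirc_idT {n : Type*} [Fintype n] [DecidableEq n] {p : ℕ} [NeZero p] :
    bcirc (idT : Fin p → Matrix n n ℂ) = 1 := by
  ext ⟨k, r⟩ ⟨l, c⟩
  simp only [bcirc, idT, Matrix.of_apply, Matrix.one_apply, sub_eq_zero, Prod.mk.injEq]
  by_cases h : k = l <;> simp [h, Matrix.one_apply]

lemma bcirc_add {m n : Type*} {p : ℕ} (A B : Fin p → Matrix m n ℂ) :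
    bcirc (A + B) = bcirc A + bcirc B := by
  ext ⟨k, r⟩ ⟨l, c⟩
  simp [bcirc]

/-- for square tensors `𝒢, ℋ` with `ℐ + ℋ * 𝒢` T-invertible (with
T-inverse `𝒦`), the block-circulant embedding of the tensor Gang-of-Four
(whose blocks are `𝒦`, `𝒦 * ℋ`, `𝒢 * 𝒦`, `𝒢 * 𝒦 * ℋ`) coincides, up to a
permutation `P` of rows and columns (`Pᵀ · (—) · P`, realized as `submatrix e e` for
an equivalence `e`), with the matrix Gang-of-Four of `bcirc 𝒢` and `bcirc ℋ`. -/
theorem bcirc_gangOfFour {m p : ℕ} [NeZero p]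
    (G H K : Fin p → Matrix (Fin m) (Fin m) ℂ)
    (hK1 : tProd (idT + tProd H G) K = idT)
    (hK2 : tProd K (idT + tProd H G) = idT) :
    ∃ e : (Fin p × (Fin m ⊕ Fin m)) ≃ ((Fin p × Fin m) ⊕ (Fin p × Fin m)),
      bcirc (fun k => Matrix.fromBlocks (K k) (tProd K H k)
          (tProd G K k) (tProd G (tProd K H) k)) =
        (gangOfFour (bcirc G) (bcirc H)).submatrix e e := by
  have h1 : (1 + bcirc H * bcirc G) * bcirc K = 1 := by
    have := congrArg bcirc hK1
    rwa [bcirc_tProd, bcirc_add, bcirc_tProd, bcirc_idT] at this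
  have hKinv : bcirc K = (1 + bcirc H * bcirc G)⁻¹ := (Matrix.inv_eq_right_inv h1).symm
  have hg : gangOfFour (bcirc G) (bcirc H) =
      Matrix.fromBlocks (bcirc K) (bcirc (tProd K H))
        (bcirc (tProd G K)) (bcirc (tProd G (tProd K H))) := by
    unfold gangOfFour
    rw [← hKinv]
    simp [bcirc_tProd, Matrix.mul_assoc]
  refine ⟨Equiv.prodSumDistrib _ _ _, ?_⟩
  rw [hg]
  ext ⟨k, i⟩ ⟨l, j⟩
  rcases i with a | a <;> rcases j with b | b <;> rfl
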